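/- Let Z ∈ ℝ^{n×n} and suppose Z = U P is a polar decomposition, i.e., U ∈ ℝ^{n×n} is orthogonal and P ∈ ℝ^{n×n} is symmetric positive semidefinite. Then ‖Z − U‖_F ≤ ‖ZᵀZ − I‖_F, where I is the n×n identity matrix. In particular, any square matrix Z with ‖ZᵀZ − I‖_F = O(δ²) is within O(δ²) in Frobenius norm of an orthogonal matrix. -/

import Mathlib

open Matrix

/-- Frobenius norm of a real square matrix. -/
noncomputable def frobNorm {n : ℕ} (X : Matrix (Fin n) (Fin n) ℝ) : ℝ :=
  Real.sqrt (∑ i, ∑ j, (X i j) ^ 2)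

namespace PolarAux

noncomputable def f {n : ℕ} (X : Matrix (Fin n) (Fin n) ℝ) : ℝ := ∑ i, ∑ j, (X i j) ^ 2

lemma frobNorm_mono {n : ℕ} {X Y : Matrix (Fin n) (Fin n) ℝ} (h : f X ≤ f Y) :
    frobNorm X ≤ frobNorm Y := Real.sqrt_le_sqrt h

lemma f_eq_trace {n : ℕ} (X : Matrix (Fin n) (Fin n) ℝ) : f X = (Xᵀ * X).trace := by
  rw [f, Finset.sum_comm]
  simp [Matrix.trace, Matrix.mul_apply, Matrix.diag, sq]

lemma f_mul_left {n : ℕ} {A : Matrix (Fin n) (Fin n) ℝ} (hA : Aᵀ * A = 1)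
    (X : Matrix (Fin n) (Fin n) ℝ) : f (A * X) = f X := by
  rw [f_eq_trace, f_eq_trace, transpose_mul, mul_assoc, ← mul_assoc Aᵀ, hA, one_mul]

lemma f_mul_right {n : ℕ} {A : Matrix (Fin n) (Fin n) ℝ} (hA : A * Aᵀ = 1)
    (X : Matrix (Fin n) (Fin n) ℝ) : f (X * A) = f X := by
  rw [f_eq_trace, f_eq_trace, transpose_mul, Matrix.trace_mul_cycle, mul_assoc X A Aᵀ, hA,
    mul_one, Matrix.trace_mul_comm]

lemma f_diagonal {n : ℕ} (d : Fin n → ℝ) : f (diagonal d) = ∑ i, d i ^ 2 := by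
  rw [f_eq_trace, diagonal_transpose, diagonal_mul_diagonal, trace_diagonal]
  simp [sq]

lemma diagonal_sub_one' {n : ℕ} (d : Fin n → ℝ) :
    diagonal d - (1 : Matrix (Fin n) (Fin n) ℝ) = diagonal (fun i => d i - 1) := by
  ext i j
  by_cases h : i = j
  · subst h; simp
  · simp [Matrix.diagonal_apply_ne _ h, Matrix.one_apply_ne h]

/-- Main inequality. -/
lemma key {n : ℕ} (Z U P : Matrix (Fin n) (Fin n) ℝ)
    (hU : Uᵀ * U = 1) (hP : P.PosSemidef) (hZ : Z = U * P) :
    frobNorm (Z - U) ≤ frobNorm (Zᵀ * Z - 1) := by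
  have hPs : Pᵀ = P := by rw [← conjTranspose_eq_transpose_of_trivial]; exact hP.1
  have h1 : Z - U = U * (P - 1) := by rw [hZ, mul_sub, mul_one]
  have h2 : Zᵀ * Z - 1 = P * P - 1 := by
    rw [hZ, transpose_mul, mul_assoc, ← mul_assoc Uᵀ, hU, one_mul, hPs]
  set V : Matrix (Fin n) (Fin n) ℝ := (hP.1.eigenvectorUnitary : Matrix (Fin n) (Fin n) ℝ)
  have hVmem := Unitary.mem_iff.mp (hP.1.eigenvectorUnitary).2
  have hstar : star V = Vᵀ := by
    rw [star_eq_conjTranspose, conjTranspose_eq_transpose_of_trivial]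
  have hVl : Vᵀ * V = 1 := by rw [← hstar]; exact hVmem.1
  have hVr : V * Vᵀ = 1 := by rw [← hstar]; exact hVmem.2
  set μ : Fin n → ℝ := hP.1.eigenvalues
  have hspec : P = V * diagonal μ * Vᵀ := by
    have := hP.1.spectral_theorem
    rw [Unitary.conjStarAlgAut_apply, hstar] at this; exact this
  have hconj : ∀ X : Matrix (Fin n) (Fin n) ℝ, f (V * X * Vᵀ) = f X := by
    intro X
    rw [f_mul_right (by rw [transpose_transpose]; exact hVl), f_mul_left hVl]
  have hPP : P * P = V * (diagonal μ * diagonal μ) * Vᵀ := by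
    rw [hspec]
    simp only [Matrix.mul_assoc]
    rw [← Matrix.mul_assoc Vᵀ V, hVl, one_mul]
  have e1 : P - 1 = V * (diagonal μ - 1) * Vᵀ := by
    rw [mul_sub, sub_mul, mul_one, hVr, ← hspec]
  have e2 : P * P - 1 = V * (diagonal μ * diagonal μ - 1) * Vᵀ := by
    rw [mul_sub, sub_mul, mul_one, hVr, ← hPP]
  apply frobNorm_mono
  rw [h1, h2, f_mul_left hU, e1, e2, hconj, hconj, diagonal_mul_diagonal,
    diagonal_sub_one', diagonal_sub_one', f_diagonal, f_diagonal]
  apply Finset.sum_le_sum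
  intro i _
  have hμi := hP.eigenvalues_nonneg i
  nlinarith [sq_nonneg (μ i - 1), sq_nonneg (μ i + 1)]

/-- Existence of polar decomposition for real square matrices. -/
lemma exists_polar {n : ℕ} (W : Matrix (Fin n) (Fin n) ℝ) :
    ∃ U P : Matrix (Fin n) (Fin n) ℝ, Uᵀ * U = 1 ∧ P.PosSemidef ∧ W = U * P := by
  have hH : (Wᵀ * W).PosSemidef := by
    simpa [conjTranspose_eq_transpose_of_trivial] using Matrix.posSemidef_conjTranspose_mul_self W
  set V : Matrix (Fin n) (Fin n) ℝ := (hH.1.eigenvectorUnitary : Matrix (Fin n) (Fin n) ℝ)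
  have hVmem := Unitary.mem_iff.mp (hH.1.eigenvectorUnitary).2
  have hstar : star V = Vᵀ := by
    rw [star_eq_conjTranspose, conjTranspose_eq_transpose_of_trivial]
  have hVl : Vᵀ * V = 1 := by rw [← hstar]; exact hVmem.1
  have hVr : V * Vᵀ = 1 := by rw [← hstar]; exact hVmem.2
  set μ : Fin n → ℝ := hH.1.eigenvalues with hμdef
  have hμ : ∀ i, 0 ≤ μ i := hH.eigenvalues_nonneg
  have hspec : Wᵀ * W = V * diagonal μ * Vᵀ := by
    have := hH.1.spectral_theorem
    rw [Unitary.conjStarAlgAut_apply, hstar] at this; exact this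
  set B : Matrix (Fin n) (Fin n) ℝ := W * V with hBdef
  have hBB : Bᵀ * B = diagonal μ := by
    rw [hBdef, transpose_mul, mul_assoc, ← mul_assoc Wᵀ, hspec]
    simp only [Matrix.mul_assoc]
    rw [hVl, mul_one, ← Matrix.mul_assoc, hVl, one_mul]
  have hBcol : ∀ i j : Fin n, μ i = 0 → B j i = 0 := by
    intro i j hi
    have hsum : ∑ k, B k i * B k i = 0 := by
      have : (Bᵀ * B) i i = diagonal μ i i := by rw [hBB]
      simpa [Matrix.mul_apply, hi] using this
    have := Finset.sum_eq_zero_iff_of_nonneg (fun k _ => mul_self_nonneg (B k i)) |>.mp hsum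
      j (Finset.mem_univ j)
    exact mul_self_eq_zero.mp this
  set c : Fin n → EuclideanSpace ℝ (Fin n) := fun i => WithLp.toLp 2 (fun j => B j i) with hcdef
  have hinnerB : ∀ i j : Fin n, (inner ℝ (c i) (c j) : ℝ) = diagonal μ i j := by
    intro i j
    rw [← hBB]
    simp [PiLp.inner_apply, RCLike.inner_apply, Matrix.mul_apply, hcdef, mul_comm]
  set v : Fin n → EuclideanSpace ℝ (Fin n) := fun i => (Real.sqrt (μ i))⁻¹ • c i with hvdef
  set s : Set (Fin n) := {i | μ i ≠ 0} with hsdef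
  have hv : Orthonormal ℝ (s.restrict v) := by
    rw [orthonormal_iff_ite]
    rintro ⟨i, hi⟩ ⟨j, hj⟩
    simp only [Set.restrict_apply, hvdef]
    show inner ℝ ((Real.sqrt (μ i))⁻¹ • c i) ((Real.sqrt (μ j))⁻¹ • c j) = _
    rw [inner_smul_left, inner_smul_right, hinnerB]
    simp only [starRingEnd_apply, star_trivial]
    by_cases hij : i = j
    · subst hij
      have hμi : (0:ℝ) < μ i := lt_of_le_of_ne (hμ i) (Ne.symm hi)
      have hs : (0:ℝ) < Real.sqrt (μ i) := Real.sqrt_pos.mpr hμi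
      have hms : Real.sqrt (μ i) * Real.sqrt (μ i) = μ i := Real.mul_self_sqrt (hμ i)
      simp only [diagonal_apply_eq, if_pos rfl]
      field_simp
      rw [if_pos trivial, mul_one, Real.sq_sqrt (hμ i)]
    · have hne : (⟨i, hi⟩ : s) ≠ ⟨j, hj⟩ := by simpa [Subtype.ext_iff] using hij
      rw [diagonal_apply_ne _ hij, if_neg hne]
      ring
  obtain ⟨b0, hb0⟩ := hv.exists_orthonormalBasis_extension_of_card_eq (by simp)
  set A : Matrix (Fin n) (Fin n) ℝ := fun j i => b0 i j with hAdef
  have hA : Aᵀ * A = 1 := by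
    ext i j
    have horth := orthonormal_iff_ite.mp b0.orthonormal i j
    simp only [PiLp.inner_apply, RCLike.inner_apply, starRingEnd_apply, star_trivial] at horth
    simp only [Matrix.mul_apply, Matrix.transpose_apply, hAdef]
    rw [Matrix.one_apply, ← horth]
    exact (Matrix.mul_apply (M := Aᵀ) (N := A)).trans (Finset.sum_congr rfl fun x _ => mul_comm _ _)
  have hAD : A * diagonal (fun i => Real.sqrt (μ i)) = B := by
    ext j i
    have hside : ∀ k ∈ Finset.univ, k ≠ i → A j k * diagonal (fun i => Real.sqrt (μ i)) k i = 0 := by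
      intro k _ hk
      rw [diagonal_apply_ne _ hk, mul_zero]
    rw [Matrix.mul_apply, Finset.sum_eq_single_of_mem i (Finset.mem_univ i) hside,
      diagonal_apply_eq]
    by_cases hi : μ i = 0
    · rw [hBcol i j hi, hi]
      simp
    · have hb : b0 i = v i := hb0 i hi
      have hμi : (0:ℝ) < μ i := lt_of_le_of_ne (hμ i) (Ne.symm hi)
      have hs : Real.sqrt (μ i) ≠ 0 := ne_of_gt (Real.sqrt_pos.mpr hμi)
      have hAji : A j i = (Real.sqrt (μ i))⁻¹ * B j i := by
        simp [hAdef, hb, hvdef, hcdef]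
      rw [hAji]
      field_simp
  refine ⟨A * Vᵀ, V * diagonal (fun i => Real.sqrt (μ i)) * Vᵀ, ?_, ?_, ?_⟩
  · rw [transpose_mul, transpose_transpose, mul_assoc, ← mul_assoc Aᵀ, hA, one_mul, hVr]
  · have hdiag : (diagonal (fun i => Real.sqrt (μ i))).PosSemidef :=
      posSemidef_diagonal_iff.mpr fun i => Real.sqrt_nonneg _
    have := hdiag.mul_mul_conjTranspose_same V
    rwa [conjTranspose_eq_transpose_of_trivial] at this
  · have hmid : A * Vᵀ * (V * diagonal (fun i => Real.sqrt (μ i)) * Vᵀ)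
        = A * diagonal (fun i => Real.sqrt (μ i)) * Vᵀ := by
      simp only [Matrix.mul_assoc]
      rw [← Matrix.mul_assoc Vᵀ V, hVl, one_mul]
    rw [hmid, hAD, hBdef, Matrix.mul_assoc, hVr, mul_one]

end PolarAux

/-- If `Z = U P` is a polar decomposition (`U` orthogonal, `P` symmetric positive
semidefinite), then `‖Z − U‖_F ≤ ‖ZᵀZ − I‖_F`. In particular, every square matrix
`Z` is within `‖ZᵀZ − I‖_F` in Frobenius norm of an orthogonal matrix. -/
theorem dist_to_polar_factor_le {n : ℕ} (Z U P : Matrix (Fin n) (Fin n) ℝ)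
    (hU : Uᵀ * U = 1) (hP : P.PosSemidef) (hZ : Z = U * P) :
    frobNorm (Z - U) ≤ frobNorm (Zᵀ * Z - 1) ∧
    ∀ W : Matrix (Fin n) (Fin n) ℝ, ∃ V : Matrix (Fin n) (Fin n) ℝ,
      Vᵀ * V = 1 ∧ frobNorm (W - V) ≤ frobNorm (Wᵀ * W - 1) := by
  refine ⟨PolarAux.key Z U P hU hP hZ, fun W => ?_⟩
  obtain ⟨U', P', hU', hP', hW⟩ := PolarAux.exists_polar W
  exact ⟨U', hU', PolarAux.key W U' P' hU' hP' hW⟩
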